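/- Let P1 be a SPARQL graph pattern containing no UNION and no OPT subpattern, and let P2 be a BGP with sv(P1) ∩ var(P2) ≠ ∅. Then for every RDF graph G, ⟦MINUS(P1,P2)⟧_G = ⟦FNE(P1,P2)⟧_G. -/

import Mathlib

/-!
Formalization of SPARQL graph-pattern syntax and semantics, following
Pérez et al. and the paper "SPARQL in N3".

* IRIs, blank nodes and literals are three pairwise disjoint infinite sets,
  packaged in the type `RTerm` (the set `T = I ∪ B ∪ L`).
* Variables form a further disjoint infinite set `Var`.
* A pattern term (`PTerm`) is an element of `T ∪ V`.
* A solution mapping is a partial function from variables to RDF terms,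
  modeled as `Var → Option RTerm`.
-/

namespace SparqlN3

/-- RDF terms: IRIs, blank nodes, literals — three disjoint infinite sets. -/
inductive RTerm : Type
  | iri : ℕ → RTerm
  | bnode : ℕ → RTerm
  | lit : ℕ → RTerm
deriving DecidableEq

/-- Variables (an infinite set, disjoint from `RTerm` by typing). -/
abbrev Var : Type := ℕ

/-- Elements of `T ∪ V`. -/
abbrev PTerm : Type := RTerm ⊕ Var

/-- Triple patterns: elements of `(T ∪ V) × (T ∪ V) × (T ∪ V)`. -/
abbrev TriplePat : Type := PTerm × PTerm × PTerm

/-- Ground RDF triples. -/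
abbrev Triple : Type := RTerm × RTerm × RTerm

/-- An RDF graph: a set of triples. -/
abbrev Graph : Type := Set Triple

/-- A basic graph pattern: a finite set of triple patterns. -/
abbrev BGP : Type := Finset TriplePat

/-- A (partial) mapping from variables to RDF terms. -/
abbrev Mapping : Type := Var → Option RTerm

/-- The domain of a mapping. -/
def mdom (μ : Mapping) : Set Var := {x | μ x ≠ none}

/-- A solution mapping has a finite domain. -/
def FiniteDom (μ : Mapping) : Prop := (mdom μ).Finite

/-- Compatibility of two mappings: they agree on the common domain. -/
def compat (μ₁ μ₂ : Mapping) : Prop :=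
  ∀ x a b, μ₁ x = some a → μ₂ x = some b → a = b

/-- Union `μ₁ ∪ μ₂` of two (compatible) mappings. -/
def munion (μ₁ μ₂ : Mapping) : Mapping :=
  fun x => (μ₁ x).elim (μ₂ x) some

def varsPT : PTerm → Finset Var
  | .inl _ => ∅
  | .inr v => {v}

/-- Variables of a triple pattern. -/
def varsTP (t : TriplePat) : Finset Var :=
  varsPT t.1 ∪ varsPT t.2.1 ∪ varsPT t.2.2

/-- Variables of a BGP. -/
def varsBGP (P : BGP) : Finset Var := P.biUnion varsTP

/-- Substitution on a pattern term: replace variables in the domain of `μ`. -/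
def substPT (μ : Mapping) : PTerm → PTerm
  | .inl t => .inl t
  | .inr v => (μ v).elim (.inr v) .inl

/-- Substitution `tμ` on a triple pattern (componentwise). -/
def substTP (μ : Mapping) (t : TriplePat) : TriplePat :=
  (substPT μ t.1, substPT μ t.2.1, substPT μ t.2.2)

/-- Substitution `Pμ` on a BGP (literal replacement of variables in `dom μ`). -/
def substBGP (μ : Mapping) (P : BGP) : BGP := P.image (substTP μ)

/-- View a ground triple as a triple pattern. -/
def toPat (t : Triple) : TriplePat := (.inl t.1, .inl t.2.1, .inl t.2.2)

/-- `InstIn G μ P` : the instantiation `Pμ` is contained in `G`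
(every triple pattern of `P` becomes, under `μ`, a ground triple of `G`). -/
def InstIn (G : Graph) (μ : Mapping) (P : BGP) : Prop :=
  ∀ tp ∈ P, ∃ t ∈ G, substTP μ tp = toPat t

/-- Evaluation of a BGP: `⟦P⟧_G = {μ | dom(μ) = var(P) ∧ Pμ ⊆ G}`. -/
def bgpEval (G : Graph) (P : BGP) : Set Mapping :=
  {μ | mdom μ = ↑(varsBGP P) ∧ InstIn G μ P}

/-- SPARQL graph patterns.  Filter conditions are modeled as predicates
on solution mappings. -/
inductive GP : Type
  | bgp : BGP → GP
  | and : GP → GP → GP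
  | union : GP → GP → GP
  | minus : GP → GP → GP
  | fe : GP → GP → GP
  | fne : GP → GP → GP
  | filter : GP → (Mapping → Prop) → GP
  | opt : GP → GP → (Mapping → Prop) → GP

/-- Substitution `Pμ` on a graph pattern, applied componentwise to triple
patterns and recursively through the constructors; for filters, the
predicate is composed with `μ`. -/
def substGP (μ : Mapping) : GP → GP
  | .bgp P => .bgp (substBGP μ P)
  | .and P₁ P₂ => .and (substGP μ P₁) (substGP μ P₂)
  | .union P₁ P₂ => .union (substGP μ P₁) (substGP μ P₂)
  | .minus P₁ P₂ => .minus (substGP μ P₁) (substGP μ P₂)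
  | .fe P₁ P₂ => .fe (substGP μ P₁) (substGP μ P₂)
  | .fne P₁ P₂ => .fne (substGP μ P₁) (substGP μ P₂)
  | .filter P R => .filter (substGP μ P) (fun ν => R (munion μ ν))
  | .opt P₁ P₂ R => .opt (substGP μ P₁) (substGP μ P₂) (fun ν => R (munion μ ν))

/-- Structural depth (used as termination measure for `eval`). -/
def depth : GP → ℕ
  | .bgp _ => 0
  | .and P₁ P₂ => max (depth P₁) (depth P₂) + 1
  | .union P₁ P₂ => max (depth P₁) (depth P₂) + 1
  | .minus P₁ P₂ => max (depth P₁) (depth P₂) + 1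
  | .fe P₁ P₂ => max (depth P₁) (depth P₂) + 1
  | .fne P₁ P₂ => max (depth P₁) (depth P₂) + 1
  | .filter P _ => depth P + 1
  | .opt P₁ P₂ _ => max (depth P₁) (depth P₂) + 1

theorem depth_substGP (μ : Mapping) (P : GP) : depth (substGP μ P) = depth P := by
  induction P <;> simp [substGP, depth, *]

/-- The scope `sv` of a graph pattern. -/
def sv : GP → Finset Var
  | .bgp P => varsBGP P
  | .and P₁ P₂ => sv P₁ ∪ sv P₂
  | .union P₁ P₂ => sv P₁ ∪ sv P₂
  | .minus P₁ _ => sv P₁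
  | .fe P₁ _ => sv P₁
  | .fne P₁ _ => sv P₁
  | .filter P _ => sv P
  | .opt P₁ P₂ _ => sv P₁ ∪ sv P₂

/-- The variables `var(P)` occurring in a graph pattern. -/
def varsGP : GP → Finset Var
  | .bgp P => varsBGP P
  | .and P₁ P₂ => varsGP P₁ ∪ varsGP P₂
  | .union P₁ P₂ => varsGP P₁ ∪ varsGP P₂
  | .minus P₁ P₂ => varsGP P₁ ∪ varsGP P₂
  | .fe P₁ P₂ => varsGP P₁ ∪ varsGP P₂
  | .fne P₁ P₂ => varsGP P₁ ∪ varsGP P₂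
  | .filter P _ => varsGP P
  | .opt P₁ P₂ _ => varsGP P₁ ∪ varsGP P₂

/-- Evaluation `⟦P⟧_G` of SPARQL graph patterns over an RDF graph `G`. -/
def eval (G : Graph) : GP → Set Mapping
  | .bgp P => bgpEval G P
  | .and P₁ P₂ =>
      {μ | ∃ μ₁ ∈ eval G P₁, ∃ μ₂ ∈ eval G P₂, compat μ₁ μ₂ ∧ μ = munion μ₁ μ₂}
  | .union P₁ P₂ => eval G P₁ ∪ eval G P₂
  | .minus P₁ P₂ =>
      {μ ∈ eval G P₁ | ∀ μ' ∈ eval G P₂, ¬ compat μ μ' ∨ mdom μ ∩ mdom μ' = ∅}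
  | .fe P₁ P₂ =>
      {μ ∈ eval G P₁ | (eval G (substGP μ P₂)).Nonempty}
  | .fne P₁ P₂ =>
      {μ ∈ eval G P₁ | eval G (substGP μ P₂) = ∅}
  | .filter P R => {μ ∈ eval G P | R μ}
  | .opt P₁ P₂ R =>
      {μ | ∃ μ₁ ∈ eval G P₁, ∃ μ₂ ∈ eval G P₂,
          compat μ₁ μ₂ ∧ R (munion μ₁ μ₂) ∧ μ = munion μ₁ μ₂}
        ∪ {μ₁ ∈ eval G P₁ | ¬ ∃ μ₂ ∈ eval G P₂, compat μ₁ μ₂ ∧ R (munion μ₁ μ₂)}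
termination_by P => depth P
decreasing_by all_goals (simp [depth_substGP, depth]; try omega)

/-- A pattern contains no UNION and no OPT subpattern. -/
def NoUnionOpt : GP → Prop
  | .bgp _ => True
  | .and P₁ P₂ => NoUnionOpt P₁ ∧ NoUnionOpt P₂
  | .union _ _ => False
  | .minus P₁ P₂ => NoUnionOpt P₁ ∧ NoUnionOpt P₂
  | .fe P₁ P₂ => NoUnionOpt P₁ ∧ NoUnionOpt P₂
  | .fne P₁ P₂ => NoUnionOpt P₁ ∧ NoUnionOpt P₂
  | .filter P _ => NoUnionOpt P
  | .opt _ _ _ => False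

/-- Renaming of variables in a pattern term. -/
def renamePT (σ : Var → Var) : PTerm → PTerm
  | .inl t => .inl t
  | .inr v => .inr (σ v)

/-- Renaming of variables in a triple pattern. -/
def renameTP (σ : Var → Var) (t : TriplePat) : TriplePat :=
  (renamePT σ t.1, renamePT σ t.2.1, renamePT σ t.2.2)

/-- Renaming `Qσ` of variables in a BGP. -/
def renameBGP (σ : Var → Var) (P : BGP) : BGP := P.image (renameTP σ)

/-- Restriction of a mapping to a set of variables. -/
def restrict (μ : Mapping) (S : Finset Var) : Mapping :=
  fun x => if x ∈ S then μ x else none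


lemma mdom_munion (μ₁ μ₂ : Mapping) : mdom (munion μ₁ μ₂) = mdom μ₁ ∪ mdom μ₂ := by
  ext x
  simp only [mdom, munion, Set.mem_setOf_eq, Set.mem_union]
  cases h : μ₁ x <;> simp [h]

lemma mem_varsPT_substPT (μ : Mapping) (p : PTerm) (v : Var) :
    v ∈ varsPT (substPT μ p) ↔ v ∈ varsPT p ∧ μ v = none := by
  cases p with
  | inl t => simp [varsPT, substPT]
  | inr w =>
    cases h : μ w with
    | none =>
      simp only [substPT, h, Option.elim, varsPT, Finset.mem_singleton]
      constructor
      · rintro rfl; exact ⟨rfl, h⟩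
      · rintro ⟨rfl, _⟩; rfl
    | some a =>
      simp only [substPT, h, Option.elim, varsPT, Finset.notMem_empty, false_iff,
        Finset.mem_singleton]
      rintro ⟨rfl, h'⟩; rw [h] at h'; exact nomatch h'

lemma mem_varsTP_substTP (μ : Mapping) (tp : TriplePat) (v : Var) :
    v ∈ varsTP (substTP μ tp) ↔ v ∈ varsTP tp ∧ μ v = none := by
  simp only [varsTP, substTP, Finset.mem_union, mem_varsPT_substPT]
  tauto

lemma mem_varsBGP_subst (μ : Mapping) (P : BGP) (v : Var) :
    v ∈ varsBGP (substBGP μ P) ↔ v ∈ varsBGP P ∧ μ v = none := by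
  simp only [varsBGP, substBGP, Finset.mem_biUnion, Finset.mem_image]
  constructor
  · rintro ⟨tp', ⟨tp, htp, rfl⟩, hv⟩
    rw [mem_varsTP_substTP] at hv
    exact ⟨⟨tp, htp, hv.1⟩, hv.2⟩
  · rintro ⟨⟨tp, htp, hv⟩, hn⟩
    exact ⟨substTP μ tp, ⟨tp, htp, rfl⟩, (mem_varsTP_substTP μ tp v).2 ⟨hv, hn⟩⟩

/-- For UNION/OPT-free patterns, every solution mapping has domain exactly `sv P`. -/
lemma dom_eval (G : Graph) : ∀ (P : GP), NoUnionOpt P →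
    ∀ μ ∈ eval G P, mdom μ = ↑(sv P) := by
  intro P
  induction P with
  | bgp P => intro _ μ hμ; rw [eval] at hμ; exact hμ.1
  | and P₁ P₂ ih₁ ih₂ =>
    intro hP μ hμ
    rw [eval] at hμ
    obtain ⟨μ₁, h₁, μ₂, h₂, _, rfl⟩ := hμ
    rw [mdom_munion, ih₁ hP.1 μ₁ h₁, ih₂ hP.2 μ₂ h₂, sv]
    simp
  | union P₁ P₂ ih₁ ih₂ => intro hP; exact absurd hP not_false
  | minus P₁ P₂ ih₁ ih₂ =>
    intro hP μ hμ
    rw [eval] at hμ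
    exact ih₁ hP.1 μ hμ.1
  | fe P₁ P₂ ih₁ ih₂ =>
    intro hP μ hμ
    rw [eval] at hμ
    exact ih₁ hP.1 μ hμ.1
  | fne P₁ P₂ ih₁ ih₂ =>
    intro hP μ hμ
    rw [eval] at hμ
    exact ih₁ hP.1 μ hμ.1
  | filter P R ih =>
    intro hP μ hμ
    rw [eval] at hμ
    exact ih hP μ hμ.1
  | opt P₁ P₂ R ih₁ ih₂ => intro hP; exact absurd hP not_false

/-- Key equivalence: incompatibility with every solution of `P₂` is equivalent
to emptiness of the evaluation of `P₂μ`. -/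
lemma forall_incompat_iff (G : Graph) (μ : Mapping) (P₂ : BGP) :
    (∀ μ' ∈ bgpEval G P₂, ¬ compat μ μ') ↔ bgpEval G (substBGP μ P₂) = ∅ := by
  constructor
  · intro hall
    rw [Set.eq_empty_iff_forall_notMem]
    intro ν hν
    obtain ⟨hdomν, hinstν⟩ := hν
    -- build μ' from μ and ν
    set μ' : Mapping := fun v => if v ∈ varsBGP P₂ then munion μ ν v else none with hμ'
    have hcompat : compat μ μ' := by
      intro x a b ha hb
      simp only [hμ'] at hb
      split at hb
      · simp [munion, ha] at hb; exact hb
      · exact nomatch hb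
    have hmem : ∀ v ∈ varsBGP P₂, μ' v = munion μ ν v := by
      intro v hv; simp [hμ', hv]
    have hdom : mdom μ' = ↑(varsBGP P₂) := by
      ext v
      simp only [mdom, Set.mem_setOf_eq, Finset.coe_sort_coe, Finset.mem_coe]
      constructor
      · intro hne
        by_contra hv
        simp [hμ', hv] at hne
      · intro hv
        rw [hmem v hv]
        cases hm : μ v with
        | some a => simp [munion, hm]
        | none =>
          have : v ∈ varsBGP (substBGP μ P₂) := (mem_varsBGP_subst μ P₂ v).2 ⟨hv, hm⟩
          have : ν v ≠ none := by
            have hvν : v ∈ mdom ν := by rw [hdomν]; exact_mod_cast this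
            exact hvν
          simp [munion, hm]
          exact this
    refine hall μ' ⟨hdom, ?_⟩ hcompat
    -- InstIn G μ' P₂
    intro tp htp
    obtain ⟨t, ht, hst⟩ := hinstν (substTP μ tp) (Finset.mem_image_of_mem _ htp)
    refine ⟨t, ht, ?_⟩
    rw [← hst]
    -- substTP μ' tp = substTP ν (substTP μ tp)
    have hPT : ∀ p : PTerm, (∀ v, p = .inr v → v ∈ varsBGP P₂) →
        substPT μ' p = substPT ν (substPT μ p) := by
      intro p hp
      cases p with
      | inl t => rfl
      | inr v =>
        have hv := hp v rfl
        cases hm : μ v with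
        | some a => simp [substPT, hmem v hv, munion, hm]
        | none => simp [substPT, hmem v hv, munion, hm]
    have hc1 : ∀ v, tp.1 = .inr v → v ∈ varsBGP P₂ := by
      rintro v hv
      exact Finset.mem_biUnion.2 ⟨tp, htp, by simp [varsTP, hv, varsPT]⟩
    have hc2 : ∀ v, tp.2.1 = .inr v → v ∈ varsBGP P₂ := by
      rintro v hv
      exact Finset.mem_biUnion.2 ⟨tp, htp, by simp [varsTP, hv, varsPT]⟩
    have hc3 : ∀ v, tp.2.2 = .inr v → v ∈ varsBGP P₂ := by
      rintro v hv
      exact Finset.mem_biUnion.2 ⟨tp, htp, by simp [varsTP, hv, varsPT]⟩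
    simp only [substTP]
    rw [hPT tp.1 hc1, hPT tp.2.1 hc2, hPT tp.2.2 hc3]
  · intro hempty μ' hμ' hcompat
    obtain ⟨hdomμ', hinstμ'⟩ := hμ'
    -- build ν := restrict μ' (varsBGP (substBGP μ P₂))
    set ν : Mapping := restrict μ' (varsBGP (substBGP μ P₂)) with hν
    have hdomν : mdom ν = ↑(varsBGP (substBGP μ P₂)) := by
      ext v
      simp only [mdom, Set.mem_setOf_eq, Finset.mem_coe, hν, restrict]
      constructor
      · intro hne
        by_contra hv
        simp [hv] at hne
      · intro hv
        have hv' : v ∈ varsBGP P₂ := ((mem_varsBGP_subst μ P₂ v).1 hv).1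
        have : v ∈ mdom μ' := by rw [hdomμ']; exact_mod_cast hv'
        simpa [hv, mdom] using this
    have hinstν : InstIn G ν (substBGP μ P₂) := by
      intro tp' htp'
      obtain ⟨tp, htp, rfl⟩ := Finset.mem_image.1 htp'
      obtain ⟨t, ht, hst⟩ := hinstμ' tp htp
      refine ⟨t, ht, ?_⟩
      rw [← hst]
      have hPT : ∀ p : PTerm, (∀ v, p = .inr v → v ∈ varsBGP P₂) →
          substPT ν (substPT μ p) = substPT μ' p := by
        intro p hp
        cases p with
        | inl t => rfl
        | inr v =>
          have hv := hp v rfl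
          cases hm : μ v with
          | some a =>
            have : v ∈ mdom μ' := by rw [hdomμ']; exact_mod_cast hv
            simp only [mdom, Set.mem_setOf_eq] at this
            obtain ⟨b, hb⟩ := Option.ne_none_iff_exists'.1 this
            have : a = b := hcompat v a b hm hb
            simp [substPT, hm, hb, this]
          | none =>
            have hvs : v ∈ varsBGP (substBGP μ P₂) := (mem_varsBGP_subst μ P₂ v).2 ⟨hv, hm⟩
            simp [substPT, hm, hν, restrict, hvs]
      have hc1 : ∀ v, tp.1 = .inr v → v ∈ varsBGP P₂ := by
        rintro v hv
        exact Finset.mem_biUnion.2 ⟨tp, htp, by simp [varsTP, hv, varsPT]⟩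
      have hc2 : ∀ v, tp.2.1 = .inr v → v ∈ varsBGP P₂ := by
        rintro v hv
        exact Finset.mem_biUnion.2 ⟨tp, htp, by simp [varsTP, hv, varsPT]⟩
      have hc3 : ∀ v, tp.2.2 = .inr v → v ∈ varsBGP P₂ := by
        rintro v hv
        exact Finset.mem_biUnion.2 ⟨tp, htp, by simp [varsTP, hv, varsPT]⟩
      simp only [substTP]
      rw [hPT tp.1 hc1, hPT tp.2.1 hc2, hPT tp.2.2 hc3]
    exact Set.eq_empty_iff_forall_notMem.1 hempty ν ⟨hdomν, hinstν⟩

/-- If `P₁` contains no UNION and no OPT subpattern, `P₂` is a BGP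
and `sv(P₁) ∩ var(P₂) ≠ ∅`, then `⟦MINUS(P₁,P₂)⟧_G = ⟦FNE(P₁,P₂)⟧_G`. -/
theorem minus_eq_fne (P₁ : GP) (hP₁ : NoUnionOpt P₁) (P₂ : BGP)
    (h : sv P₁ ∩ varsBGP P₂ ≠ ∅) (G : Graph) :
    eval G (.minus P₁ (.bgp P₂)) = eval G (.fne P₁ (.bgp P₂)) := by
  have hne : (↑(sv P₁) ∩ ↑(varsBGP P₂) : Set Var) ≠ ∅ := by
    rw [← Finset.coe_inter]
    exact fun hc => h (Finset.coe_eq_empty.1 hc)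
  ext μ
  simp only [eval, substGP, Set.mem_setOf_eq]
  constructor
  · rintro ⟨hμ, hall⟩
    refine ⟨hμ, ?_⟩
    rw [← forall_incompat_iff]
    intro μ' hμ' hcompat
    have h1 : mdom μ = ↑(sv P₁) := dom_eval G P₁ hP₁ μ hμ
    have h2 : mdom μ' = ↑(varsBGP P₂) := hμ'.1
    rcases hall μ' hμ' with hc | hd
    · exact hc hcompat
    · rw [h1, h2] at hd; exact hne hd
  · rintro ⟨hμ, hempty⟩
    refine ⟨hμ, ?_⟩
    have := (forall_incompat_iff G μ P₂).2 hempty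
    intro μ' hμ'
    exact Or.inl (this μ' hμ')

end SparqlN3
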